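/- Let F be a field of characteristic p, let q = p^e with e ≥ 1, and define f : HahnSeries ℚ F → HahnSeries ℚ F by f(x) = x^q − (single 1 1)·x, with f^{[m]} its m-th iterate (f^{[0]} = id). For n ≥ 1 let y_n ∈ HahnSeries ℚ F be the Hahn series with coefficient 1 at each rational of the form 1/(q−1) − q^{−k_1} − ⋯ − q^{−k_{n−1}} (0 < k_1 < ⋯ < k_{n−1} integers) and 0 elsewhere. Then f^{[n]}(y_n) = 0 and f^{[n−1]}(y_n) ≠ 0; moreover (f^{[n−1]}(y_n))^{q−1} = single 1 1, i.e., y_n is a root of g_n(X) = (f^{[n−1]}(X))^{q−1} − T, a primitive π^n-torsion point of the Lubin–Tate formal module for the uniformizer −T. -/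

import Mathlib

noncomputable section

/-- The set `A_n ⊆ ℚ` of rationals of the form `1/(q-1) - q^{-k_1} - ⋯ - q^{-k_{n-1}}`
with `0 < k_1 < ⋯ < k_{n-1}` integers (so `A_1 = {1/(q-1)}`). -/
def lubinTateExpSet (q n : ℕ) : Set ℚ :=
  {x | ∃ κ : Fin (n - 1) → ℕ, StrictMono κ ∧ (∀ j, 0 < κ j) ∧
    x = 1 / ((q : ℚ) - 1) - ∑ j, (q : ℚ) ^ (-(κ j : ℤ))}

/-- The Lubin-Tate map `f(x) = x^q - T·x` on `HahnSeries ℚ F`, where `T = single 1 1`. -/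
def lubinTateMap (F : Type*) [Field F] (q : ℕ) :
    HahnSeries ℚ F → HahnSeries ℚ F :=
  fun x => x ^ q - HahnSeries.single (1 : ℚ) 1 * x

section Aux
open HahnSeries

variable {F : Type*} [Field F]

/-- truncation at `≤ c` etc. -/
def cutOf (P : ℚ → Prop) [DecidablePred P] (x : HahnSeries ℚ F) : HahnSeries ℚ F where
  coeff a := if P a then x.coeff a else 0
  isPWO_support' := x.isPWO_support'.mono (by
    intro a ha
    simp only [Function.mem_support, ne_eq] at ha ⊢
    intro h; apply ha; rw [h]; simp)

lemma cutOf_coeff (P : ℚ → Prop) [DecidablePred P] (x : HahnSeries ℚ F) (a : ℚ) :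
    (cutOf P x).coeff a = if P a then x.coeff a else 0 := rfl

lemma coeff_pow_eq_zero_of_lt {x : HahnSeries ℚ F} {c : ℚ}
    (hx : ∀ a, x.coeff a ≠ 0 → a < c) :
    ∀ m : ℕ, 1 ≤ m → ∀ g : ℚ, (m : ℚ) * c ≤ g → (x ^ m).coeff g = 0 := by
  intro m hm
  induction m, hm using Nat.le_induction with
  | base =>
    intro g hg
    by_contra h
    rw [pow_one] at h
    have := hx g h
    simp only [Nat.cast_one, one_mul] at hg
    exact absurd (lt_of_lt_of_le this hg) (lt_irrefl g)
  | succ m hm ih =>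
    intro g hg
    by_contra h
    rw [pow_succ] at h
    have hmem : g ∈ (x ^ m * x).support := h
    obtain ⟨a, ha, b, hb, hab⟩ := support_mul_subset hmem
    have ha' : a < (m : ℚ) * c := by
      by_contra hle
      exact ha (ih a (le_of_not_gt hle))
    have hb' : b < c := hx b hb
    have : a + b < ((m:ℕ) + 1 : ℚ) * c := by
      have := add_lt_add ha' hb'
      linarith
    have hab2 : a + b = g := hab
    rw [hab2] at this
    push_cast at hg
    linarith

lemma coeff_pow_eq_zero_of_gt {x : HahnSeries ℚ F} {c : ℚ}
    (hx : ∀ a, x.coeff a ≠ 0 → c < a) :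
    ∀ m : ℕ, 1 ≤ m → ∀ g : ℚ, g ≤ (m : ℚ) * c → (x ^ m).coeff g = 0 := by
  intro m hm
  induction m, hm using Nat.le_induction with
  | base =>
    intro g hg
    by_contra h
    rw [pow_one] at h
    have := hx g h
    simp only [Nat.cast_one, one_mul] at hg
    linarith
  | succ m hm ih =>
    intro g hg
    by_contra h
    rw [pow_succ] at h
    have hmem : g ∈ (x ^ m * x).support := h
    obtain ⟨a, ha, b, hb, hab⟩ := support_mul_subset hmem
    have ha' : (m : ℚ) * c < a := by
      by_contra hle
      exact ha (ih a (le_of_not_gt hle))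
    have hb' : c < b := hx b hb
    have : ((m:ℕ) + 1 : ℚ) * c < a + b := by linarith
    have hab2 : a + b = g := hab
    rw [hab2] at this
    push_cast at hg
    linarith

instance hahnCharP (p : ℕ) [CharP F p] : CharP (HahnSeries ℚ F) p :=
  charP_of_injective_ringHom (f := (HahnSeries.C : F →+* HahnSeries ℚ F)) C_injective p

/-- Frobenius for Hahn series over a char-`p` field. -/
lemma frobenius_coeff (p : ℕ) [Fact p.Prime] [CharP F p] {e q : ℕ} (hq : q = p ^ e)
    (x : HahnSeries ℚ F) (g : ℚ) :
    (x ^ q).coeff g = (x.coeff (g / q)) ^ q := by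
  have hq1 : 1 ≤ q := by
    rw [hq]; exact Nat.one_le_pow _ _ (Fact.out (p := p.Prime)).pos
  have hq0 : (0:ℚ) < (q:ℚ) := by exact_mod_cast hq1
  set c : ℚ := g / q with hc
  have hgc : (q : ℚ) * c = g := by
    rw [hc, mul_div_cancel₀ _ hq0.ne']
  set w : HahnSeries ℚ F := cutOf (· < c) x with hw
  set v : HahnSeries ℚ F := cutOf (c < ·) x with hv
  set z : HahnSeries ℚ F := single c (x.coeff c) with hz
  have hx : x = w + z + v := by
    ext a
    simp only [HahnSeries.coeff_add, hw, hv, hz, cutOf]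
    rcases lt_trichotomy a c with h | h | h
    · rw [if_pos h, if_neg (asymm h), coeff_single_of_ne h.ne, add_zero, add_zero]
    · subst h; simp
    · rw [if_neg (asymm h), if_pos h, coeff_single_of_ne h.ne', zero_add, zero_add]
  have hsplit : x ^ q = w ^ q + z ^ q + v ^ q := by
    rw [hx, hq, add_pow_char_pow, add_pow_char_pow]
  rw [hsplit]
  simp only [HahnSeries.coeff_add]
  have hwq : (w ^ q).coeff g = 0 := by
    apply coeff_pow_eq_zero_of_lt (c := c) _ q hq1 g (le_of_eq hgc)
    intro a ha
    by_contra hle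
    exact ha (by simp [hw, cutOf, hle])
  have hvq : (v ^ q).coeff g = 0 := by
    apply coeff_pow_eq_zero_of_gt (c := c) _ q hq1 g (ge_of_eq hgc)
    intro a ha
    by_contra hle
    exact ha (by simp [hv, cutOf, hle])
  have hzq : (z ^ q).coeff g = (x.coeff c) ^ q := by
    rw [hz, single_pow]
    have : (q : ℕ) • c = g := by rw [nsmul_eq_mul, hgc]
    rw [this, coeff_single_same]
  rw [hwq, hvq, hzq, zero_add, add_zero]

section SetLemmas
variable {q : ℕ} (hq2 : 2 ≤ q)
include hq2

lemma lt_sum_bound (m : ℕ) (κ : Fin m → ℕ) (hmono : StrictMono κ) (hpos : ∀ j, 0 < κ j) :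
    0 ≤ ∑ j, (q:ℚ) ^ (-(κ j : ℤ)) ∧ ∑ j, (q:ℚ) ^ (-(κ j : ℤ)) < 1/((q:ℚ)-1) := by
  have hz1 : (1:ℚ) < q := by exact_mod_cast hq2
  have hz0 : (0:ℚ) < q := by linarith
  constructor
  · apply Finset.sum_nonneg; intro j _; positivity
  · have hk : ∀ j : Fin m, (j : ℕ) + 1 ≤ κ j := by
      have key : ∀ i : ℕ, ∀ h : i < m, i + 1 ≤ κ ⟨i, h⟩ := by
        intro i
        induction i with
        | zero => intro h; exact hpos _
        | succ i ih =>
          intro h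
          have h' : i < m := Nat.lt_of_succ_lt h
          have h1 := ih h'
          have hlt : κ ⟨i, h'⟩ < κ ⟨i+1, h⟩ := hmono (by simp [Fin.mk_lt_mk])
          omega
      intro j
      have := key j.val j.isLt
      simpa using this
    set r : ℚ := (q:ℚ)⁻¹ with hr
    have hr0 : 0 < r := by positivity
    have hr1 : r < 1 := by rw [hr, inv_lt_one_iff₀]; right; exact hz1
    have hterm : ∀ j : Fin m, (q:ℚ) ^ (-(κ j : ℤ)) ≤ r ^ ((j : ℕ) + 1) := by
      intro j
      have h1 : (q:ℚ) ^ (-(κ j : ℤ)) ≤ (q:ℚ) ^ (-(((j:ℕ) + 1 : ℕ) : ℤ)) := by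
        apply zpow_le_zpow_right₀ hz1.le
        have := hk j
        omega
      calc (q:ℚ) ^ (-(κ j : ℤ)) ≤ (q:ℚ) ^ (-(((j:ℕ) + 1 : ℕ) : ℤ)) := h1
        _ = r ^ ((j:ℕ) + 1) := by
          rw [zpow_neg, zpow_natCast, hr, inv_pow]
    have hsum1 : ∑ j, (q:ℚ) ^ (-(κ j : ℤ)) ≤ ∑ j : Fin m, r ^ ((j:ℕ) + 1) :=
      Finset.sum_le_sum (fun j _ => hterm j)
    have hsum2 : ∑ j : Fin m, r ^ ((j:ℕ) + 1) = r * ∑ i ∈ Finset.range m, r ^ i := by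
      rw [Finset.mul_sum, Fin.sum_univ_eq_sum_range (fun i => r ^ (i + 1))]
      exact Finset.sum_congr rfl (fun i _ => by ring)
    have hsum3 : ∑ i ∈ Finset.range m, r ^ i < 1 / (1 - r) := by
      have hne : r ≠ 1 := ne_of_lt hr1
      have heq : ∑ i ∈ Finset.range m, r ^ i = (1 - r ^ m) / (1 - r) := by
        rw [geom_sum_eq hne, div_eq_div_iff (sub_ne_zero.mpr hne) (sub_ne_zero.mpr (ne_of_gt hr1))]
        ring
      rw [heq, div_lt_div_iff₀ (by linarith) (by linarith)]
      have hpow : 0 < r ^ m := pow_pos hr0 m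
      nlinarith
    have hfin : r * (1 / (1 - r)) = 1 / ((q:ℚ) - 1) := by
      rw [hr]
      have h1 : (1:ℚ) - (q:ℚ)⁻¹ ≠ 0 := by
        have : (q:ℚ)⁻¹ < 1 := hr1
        linarith
      have h2 : (q:ℚ) - 1 ≠ 0 := by linarith
      field_simp
    calc ∑ j, (q:ℚ) ^ (-(κ j : ℤ)) ≤ r * ∑ i ∈ Finset.range m, r ^ i := by
          rw [← hsum2]; exact hsum1
      _ < r * (1 / (1 - r)) := by
          apply mul_lt_mul_of_pos_left hsum3 hr0
      _ = 1 / ((q:ℚ) - 1) := hfin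


lemma mem_bounds {n : ℕ} {x : ℚ} (hx : x ∈ lubinTateExpSet q n) :
    0 < x ∧ x ≤ 1/((q:ℚ)-1) := by
  obtain ⟨κ, hmono, hpos, rfl⟩ := hx
  obtain ⟨h0, h1⟩ := lt_sum_bound hq2 _ κ hmono hpos
  constructor <;> linarith

omit hq2 in
lemma mem_succ_iff (m : ℕ) (x : ℚ) : x ∈ lubinTateExpSet q (m+1) ↔
    ∃ κ : Fin m → ℕ, StrictMono κ ∧ (∀ j, 0 < κ j) ∧
      x = 1/((q:ℚ)-1) - ∑ j, (q:ℚ) ^ (-(κ j : ℤ)) := Iff.rfl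

lemma mem_A1 {x : ℚ} : x ∈ lubinTateExpSet q 1 ↔ x = 1/((q:ℚ)-1) := by
  rw [mem_succ_iff]
  constructor
  · rintro ⟨κ, -, -, rfl⟩; simp
  · rintro rfl
    exact ⟨Fin.elim0, fun a => a.elim0, fun a => a.elim0, by simp⟩

lemma hmulkey (m : ℕ) (κ : Fin m → ℕ) :
    (q:ℚ) * (1/((q:ℚ)-1) - ∑ j, (q:ℚ) ^ (-(κ j : ℤ))) =
      1 + 1/((q:ℚ)-1) - ∑ j, (q:ℚ) ^ (1 - (κ j : ℤ)) := by
  have hz1 : (1:ℚ) < q := by exact_mod_cast hq2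
  have hq0 : (q:ℚ) ≠ 0 := by linarith
  have hq1 : (q:ℚ) - 1 ≠ 0 := by linarith
  rw [mul_sub, Finset.mul_sum]
  congr 1
  · field_simp; ring
  · apply Finset.sum_congr rfl
    intro j _
    rw [sub_eq_add_neg, zpow_add₀ hq0, zpow_one]

lemma set0 (g : ℚ) : g/(q:ℚ) ∈ lubinTateExpSet q 1 ↔ g - 1 ∈ lubinTateExpSet q 1 := by
  have hz1 : (1:ℚ) < q := by exact_mod_cast hq2
  have hq0 : (q:ℚ) ≠ 0 := by linarith
  have hq1 : (q:ℚ) - 1 ≠ 0 := by linarith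
  rw [mem_A1 hq2, mem_A1 hq2, div_eq_iff hq0, sub_eq_iff_eq_add]
  have key : (1/((q:ℚ)-1)) * q = 1/((q:ℚ)-1) + 1 := by field_simp; ring
  rw [key]

lemma disjAB (l : ℕ) (g : ℚ) (h1 : g - 1 ∈ lubinTateExpSet q (l+2)) :
    g ∉ lubinTateExpSet q (l+1) := by
  intro h2
  have hz2 : (2:ℚ) ≤ q := by exact_mod_cast hq2
  have b1 := (mem_bounds hq2 h1).1
  have b2 := (mem_bounds hq2 h2).2
  have hle : 1/((q:ℚ)-1) ≤ 1 := by
    rw [div_le_one (by linarith)]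
    linarith
  linarith

omit hq2 in
lemma strictMono_cons {l : ℕ} (κ : Fin l → ℕ) (hmono : StrictMono κ) (hpos : ∀ j, 0 < κ j) :
    StrictMono (Fin.cons 1 (fun j => κ j + 1) : Fin (l+1) → ℕ) := by
  intro i j hij
  induction i using Fin.cases with
  | zero =>
    induction j using Fin.cases with
    | zero => exact absurd hij (lt_irrefl _)
    | succ j =>
      simp only [Fin.cons_zero, Fin.cons_succ]
      have := hpos j
      omega
  | succ i =>
    induction j using Fin.cases with
    | zero => exact absurd hij (by simp)
    | succ j =>
      simp only [Fin.cons_succ]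
      have := hmono (Fin.succ_lt_succ_iff.mp hij)
      omega

lemma setS (l : ℕ) (g : ℚ) :
    g/(q:ℚ) ∈ lubinTateExpSet q (l+2) ↔
      (g - 1 ∈ lubinTateExpSet q (l+2) ∨ g ∈ lubinTateExpSet q (l+1)) := by
  have hz1 : (1:ℚ) < q := by exact_mod_cast hq2
  have hq0 : (q:ℚ) ≠ 0 := by linarith
  have hq1 : (q:ℚ) - 1 ≠ 0 := by linarith
  rw [show l + 2 = (l+1) + 1 from rfl, mem_succ_iff, mem_succ_iff, mem_succ_iff]
  constructor
  · rintro ⟨κ, hmono, hpos, hx⟩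
    have hg : g = 1 + 1/((q:ℚ)-1) - ∑ j, (q:ℚ) ^ (1 - (κ j : ℤ)) := by
      have h1 : g = (q:ℚ) * (g / q) := by field_simp
      rw [h1, hx, hmulkey hq2]
    by_cases h0 : κ 0 = 1
    · right
      refine ⟨fun j => κ j.succ - 1, ?_, ?_, ?_⟩
      · intro i j hij
        have h1 : κ i.succ < κ j.succ := hmono (Fin.succ_lt_succ_iff.mpr hij)
        have h2 : 0 < κ i.succ := hpos _
        show κ i.succ - 1 < κ j.succ - 1
        omega
      · intro j
        have : κ 0 < κ j.succ := hmono (Fin.succ_pos j)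
        show 0 < κ j.succ - 1
        omega
      · have hterm : ∀ j : Fin l, (q:ℚ) ^ (-((κ j.succ - 1 : ℕ) : ℤ)) =
            (q:ℚ) ^ (1 - (κ j.succ : ℤ)) := by
          intro j
          congr 1
          have h1 : κ 0 < κ j.succ := hmono (Fin.succ_pos j)
          have h2 : 1 ≤ κ j.succ := by omega
          push_cast [Nat.cast_sub h2]
          ring
        rw [Finset.sum_congr rfl (fun j _ => hterm j), hg,
          Fin.sum_univ_succ (f := fun j : Fin (l+1) => (q:ℚ) ^ (1 - (κ j : ℤ))), h0]
        norm_num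
    · left
      have h2 : ∀ j, 2 ≤ κ j := by
        intro j
        have h3 : κ 0 ≤ κ j := hmono.monotone (Fin.zero_le j)
        have h4 := hpos 0
        omega
      refine ⟨fun j => κ j - 1, ?_, ?_, ?_⟩
      · intro i j hij
        have h5 := hmono hij
        have h6 := h2 i
        show κ i - 1 < κ j - 1
        omega
      · intro j
        have h6 := h2 j
        show 0 < κ j - 1
        omega
      · have hterm : ∀ j : Fin (l+1), (q:ℚ) ^ (-((κ j - 1 : ℕ) : ℤ)) =
            (q:ℚ) ^ (1 - (κ j : ℤ)) := by
          intro j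
          congr 1
          have h3 : 1 ≤ κ j := by have := h2 j; omega
          push_cast [Nat.cast_sub h3]
          ring
        rw [Finset.sum_congr rfl (fun j _ => hterm j), hg]
        ring
  · rintro (⟨κ, hmono, hpos, hx⟩ | ⟨κ, hmono, hpos, hx⟩)
    · refine ⟨fun j => κ j + 1, ?_, ?_, ?_⟩
      · intro i j hij
        exact Nat.add_lt_add_right (hmono hij) 1
      · intro j
        show 0 < κ j + 1
        omega
      · rw [div_eq_iff hq0, mul_comm]
        rw [hmulkey hq2 (l+1) (fun j => κ j + 1)]
        have hterm : ∀ j : Fin (l+1), (q:ℚ) ^ ((1:ℤ) - ((κ j + 1 : ℕ) : ℤ)) =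
            (q:ℚ) ^ (-(κ j : ℤ)) := by
          intro j
          congr 1
          push_cast
          ring
        rw [Finset.sum_congr rfl (fun j _ => hterm j)]
        linarith [hx]
    · refine ⟨Fin.cons 1 (fun j => κ j + 1), strictMono_cons κ hmono hpos, ?_, ?_⟩
      · intro j
        induction j using Fin.cases with
        | zero => simp
        | succ j => simp
      · rw [div_eq_iff hq0, mul_comm, hmulkey hq2 (l+1) (Fin.cons 1 (fun j => κ j + 1))]
        rw [Fin.sum_univ_succ
          (f := fun j : Fin (l+1) => (q:ℚ) ^ ((1:ℤ) - ((Fin.cons 1 (fun j => κ j + 1) : Fin (l+1) → ℕ) j : ℤ)))]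
        simp only [Fin.cons_zero, Fin.cons_succ]
        have hterm : ∀ j : Fin l, (q:ℚ) ^ ((1:ℤ) - ((κ j + 1 : ℕ) : ℤ)) =
            (q:ℚ) ^ (-(κ j : ℤ)) := by
          intro j
          congr 1
          push_cast
          ring
        rw [Finset.sum_congr rfl (fun j _ => hterm j)]
        simp only [Nat.cast_one, sub_self, zpow_zero]
        linarith [hx]

end SetLemmas

end Aux


/-- Let `F` be a field of characteristic `p`, `q = p^e` with `e ≥ 1`, and let `y_n` be the Hahn
series with coefficient `1` exactly on `A_n`. Then `f^{[n]}(y_n) = 0`, `f^{[n-1]}(y_n) ≠ 0`,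
and `(f^{[n-1]}(y_n))^{q-1} = T`; i.e. `y_n` is a root of
`g_n(X) = (f^{[n-1]}(X))^{q-1} - T`, a primitive `π^n`-torsion point of the Lubin-Tate formal
module for the uniformizer `-T`. -/
theorem lubinTate_hahnSeries_primitive_torsion (p : ℕ) [Fact p.Prime] (F : Type*) [Field F]
    [CharP F p] (e : ℕ) (he : 1 ≤ e) (q : ℕ) (hq : q = p ^ e)
    (y : ℕ → HahnSeries ℚ F)
    (hy : ∀ n : ℕ, (y n).coeff = Set.indicator (lubinTateExpSet q n) fun _ => (1 : F))
    (n : ℕ) (hn : 1 ≤ n) :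
    (lubinTateMap F q)^[n] (y n) = 0 ∧
    (lubinTateMap F q)^[n - 1] (y n) ≠ 0 ∧
    ((lubinTateMap F q)^[n - 1] (y n)) ^ (q - 1) = HahnSeries.single (1 : ℚ) 1 := by
  have hp2 : 2 ≤ p := (Fact.out (p := p.Prime)).two_le
  have hq2 : 2 ≤ q := by
    rw [hq]
    calc 2 ≤ p := hp2
      _ ≤ p ^ e := Nat.le_self_pow (by omega) p
  have hz1 : (1:ℚ) < q := by exact_mod_cast hq2
  have hq1 : (q:ℚ) - 1 ≠ 0 := by linarith
  have hq0 : q ≠ 0 := by omega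
  have hcoeff : ∀ (x : HahnSeries ℚ F) (g : ℚ),
      (lubinTateMap F q x).coeff g = (x.coeff (g / (q:ℚ))) ^ q - x.coeff (g - 1) := by
    intro x g
    have hs : (HahnSeries.single (1:ℚ) (1:F) * x).coeff g = x.coeff (g - 1) := by
      conv_lhs => rw [show g = (g - 1) + 1 from by ring]
      rw [HahnSeries.coeff_single_mul_add, one_mul]
    show (x ^ q - HahnSeries.single (1:ℚ) 1 * x).coeff g = _
    rw [HahnSeries.coeff_sub, hs, frobenius_coeff p hq x g]
  have key1 : lubinTateMap F q (y 1) = 0 := by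
    ext g
    rw [hcoeff, hy 1, HahnSeries.coeff_zero]
    by_cases h : g - 1 ∈ lubinTateExpSet q 1
    · have h' : g / (q:ℚ) ∈ lubinTateExpSet q 1 := (set0 hq2 g).mpr h
      rw [Set.indicator_of_mem h', Set.indicator_of_mem h, one_pow, sub_self]
    · have h' : g / (q:ℚ) ∉ lubinTateExpSet q 1 := fun hh => h ((set0 hq2 g).mp hh)
      rw [Set.indicator_of_notMem h', Set.indicator_of_notMem h, sub_zero, zero_pow hq0]
  have keyS : ∀ l : ℕ, lubinTateMap F q (y (l+2)) = y (l+1) := by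
    intro l
    ext g
    rw [hcoeff, hy (l+2), hy (l+1)]
    by_cases hb : g ∈ lubinTateExpSet q (l+1)
    · have h1 : g - 1 ∉ lubinTateExpSet q (l+2) := fun h => disjAB hq2 l g h hb
      have h2 : g / (q:ℚ) ∈ lubinTateExpSet q (l+2) := (setS hq2 l g).mpr (Or.inr hb)
      rw [Set.indicator_of_mem h2, Set.indicator_of_notMem h1, Set.indicator_of_mem hb,
        one_pow, sub_zero]
    · by_cases hc : g - 1 ∈ lubinTateExpSet q (l+2)
      · have h2 : g / (q:ℚ) ∈ lubinTateExpSet q (l+2) := (setS hq2 l g).mpr (Or.inl hc)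
        rw [Set.indicator_of_mem h2, Set.indicator_of_mem hc, Set.indicator_of_notMem hb,
          one_pow, sub_self]
      · have h2 : g / (q:ℚ) ∉ lubinTateExpSet q (l+2) := by
          intro hh
          rcases (setS hq2 l g).mp hh with h | h
          exacts [hc h, hb h]
        rw [Set.indicator_of_notMem h2, Set.indicator_of_notMem hc,
          Set.indicator_of_notMem hb, zero_pow hq0, sub_zero]
  have hy1single : y 1 = HahnSeries.single (1/((q:ℚ)-1)) (1:F) := by
    ext g
    rw [hy 1]
    by_cases h : g = 1/((q:ℚ)-1)
    · subst h
      rw [Set.indicator_of_mem ((mem_A1 hq2).mpr rfl), HahnSeries.coeff_single_same]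
    · rw [Set.indicator_of_notMem (fun hh => h ((mem_A1 hq2).mp hh)),
        HahnSeries.coeff_single_of_ne h]
  have hy1ne : y 1 ≠ 0 := by
    rw [hy1single]
    exact HahnSeries.single_ne_zero one_ne_zero
  have hiter : ∀ l : ℕ, (lubinTateMap F q)^[l] (y (l+1)) = y 1 := by
    intro l
    induction l with
    | zero => simp
    | succ l ih => rw [Function.iterate_succ_apply, keyS l, ih]
  obtain ⟨l, rfl⟩ : ∃ l, n = l + 1 := ⟨n - 1, (Nat.succ_pred_eq_of_pos hn).symm⟩
  have hl : l + 1 - 1 = l := rfl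
  refine ⟨?_, ?_, ?_⟩
  · rw [Function.iterate_succ_apply', hiter l, key1]
  · rw [hl, hiter l]
    exact hy1ne
  · rw [hl, hiter l, hy1single, HahnSeries.single_pow, one_pow]
    congr 1
    rw [nsmul_eq_mul]
    have hcast : ((q - 1 : ℕ) : ℚ) = (q:ℚ) - 1 := by
      rw [Nat.cast_sub (by omega : 1 ≤ q), Nat.cast_one]
    rw [hcast, mul_one_div, div_self hq1]

end
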